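/- Let X be a finite set partitioned into X₁ and X₂, and let F ⊆ 2^X be a 1-part intersecting, 1-part Sperner family: there is no pair of distinct sets F₁, F₂ ∈ F such that the traces on one part are disjoint (F₁ ∩ X_i) ∩ (F₂ ∩ X_i) = ∅ and the traces on the other part are in containment (F₁ ∩ X_j ⊆ F₂ ∩ X_j or F₂ ∩ X_j ⊆ F₁ ∩ X_j, {i,j} = {1,2}). Then |F| ≤ 2^{|X|−2}. -/

import Mathlib

open Finset

lemma lemL' {β : Type*} [Fintype β] [DecidableEq β] (hn : 1 ≤ Fintype.card β)
    (G H : Finset (Finset β))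
    (hGint : ∀ g ∈ G, ∀ g' ∈ G, g ≠ g' → g ∩ g' ≠ ∅)
    (hHint : ∀ h ∈ H, ∀ h' ∈ H, h ≠ h' → h ∩ h' ≠ ∅)
    (hcross : ∀ g ∈ G, ∀ h ∈ H, ¬ g ⊆ h ∧ ¬ h ⊆ g) :
    2 * (G.card + H.card) ≤ 2 ^ Fintype.card β := by
  have h2n : (2:ℕ) ≤ 2 ^ Fintype.card β := by
    calc (2:ℕ) = 2 ^ 1 := rfl
    _ ≤ 2 ^ Fintype.card β := Nat.pow_le_pow_right (by norm_num) hn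
  by_cases hG0 : (∅ : Finset β) ∈ G
  · have hH : H = ∅ := by
      rw [eq_empty_iff_forall_notMem]
      intro h hh
      exact (hcross _ hG0 h hh).1 (empty_subset _)
    have hG : G ⊆ {∅} := by
      intro g hg
      rw [mem_singleton]
      by_contra hne
      exact hGint _ hG0 g hg (Ne.symm hne) (by simp)
    have := card_le_card hG
    simp only [card_singleton] at this
    subst hH
    simp only [card_empty, add_zero]
    omega
  by_cases hH0 : (∅ : Finset β) ∈ H
  · have hG : G = ∅ := by
      rw [eq_empty_iff_forall_notMem]
      intro g hg
      exact (hcross g hg _ hH0).2 (empty_subset _)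
    have hH : H ⊆ {∅} := by
      intro h hh
      rw [mem_singleton]
      by_contra hne
      exact hHint _ hH0 h hh (Ne.symm hne) (by simp)
    have := card_le_card hH
    simp only [card_singleton] at this
    subst hG
    simp only [card_empty, zero_add]
    omega
  -- main case
  set n := Fintype.card β
  set N := 2 ^ n with hN
  classical
  set U₁ : Finset (Finset β) := univ.filter (fun S => ∃ g ∈ G, g ⊆ S) with hU₁def
  set D₁ : Finset (Finset β) := univ.filter (fun S => ∃ g ∈ G, S ⊆ g) with hD₁def
  set U₂ : Finset (Finset β) := univ.filter (fun S => ∃ h ∈ H, h ⊆ S) with hU₂def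
  set D₂ : Finset (Finset β) := univ.filter (fun S => ∃ h ∈ H, S ⊆ h) with hD₂def
  have memU₁ : ∀ S, S ∈ U₁ ↔ ∃ g ∈ G, g ⊆ S := by intro S; simp [hU₁def]
  have memD₁ : ∀ S, S ∈ D₁ ↔ ∃ g ∈ G, S ⊆ g := by intro S; simp [hD₁def]
  have memU₂ : ∀ S, S ∈ U₂ ↔ ∃ h ∈ H, h ⊆ S := by intro S; simp [hU₂def]
  have memD₂ : ∀ S, S ∈ D₂ ↔ ∃ h ∈ H, S ⊆ h := by intro S; simp [hD₂def]
  have hU₁up : IsUpperSet (↑U₁ : Set (Finset β)) := by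
    intro a b hab ha
    rw [mem_coe, memU₁] at *
    obtain ⟨g, hg, hga⟩ := ha
    exact ⟨g, hg, hga.trans hab⟩
  have hU₂up : IsUpperSet (↑U₂ : Set (Finset β)) := by
    intro a b hab ha
    rw [mem_coe, memU₂] at *
    obtain ⟨g, hg, hga⟩ := ha
    exact ⟨g, hg, hga.trans hab⟩
  have hD₁lo : IsLowerSet (↑D₁ : Set (Finset β)) := by
    intro a b hab ha
    rw [mem_coe, memD₁] at *
    obtain ⟨g, hg, hga⟩ := ha
    exact ⟨g, hg, hab.trans hga⟩
  have hD₂lo : IsLowerSet (↑D₂ : Set (Finset β)) := by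
    intro a b hab ha
    rw [mem_coe, memD₂] at *
    obtain ⟨g, hg, hga⟩ := ha
    exact ⟨g, hg, hab.trans hga⟩
  have hGsub : G ⊆ U₁ ∩ D₁ := by
    intro g hg
    rw [mem_inter, memU₁, memD₁]
    exact ⟨⟨g, hg, subset_rfl⟩, ⟨g, hg, subset_rfl⟩⟩
  have hHsub : H ⊆ U₂ ∩ D₂ := by
    intro h hh
    rw [mem_inter, memU₂, memD₂]
    exact ⟨⟨h, hh, subset_rfl⟩, ⟨h, hh, subset_rfl⟩⟩
  have kle1 : N * G.card ≤ U₁.card * D₁.card := by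
    calc N * G.card ≤ N * (U₁ ∩ D₁).card :=
          Nat.mul_le_mul_left _ (card_le_card hGsub)
    _ ≤ U₁.card * D₁.card := hU₁up.card_inter_le_finset hD₁lo
  have kle2 : N * H.card ≤ U₂.card * D₂.card := by
    calc N * H.card ≤ N * (U₂ ∩ D₂).card :=
          Nat.mul_le_mul_left _ (card_le_card hHsub)
    _ ≤ U₂.card * D₂.card := hU₂up.card_inter_le_finset hD₂lo
  have hdisj1 : Disjoint U₁ D₂ := by
    rw [disjoint_left]
    intro S hS1 hS2
    rw [memU₁] at hS1
    rw [memD₂] at hS2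
    obtain ⟨g, hg, hgS⟩ := hS1
    obtain ⟨h, hh, hSh⟩ := hS2
    exact (hcross g hg h hh).1 (hgS.trans hSh)
  have hdisj2 : Disjoint U₂ D₁ := by
    rw [disjoint_left]
    intro S hS1 hS2
    rw [memU₂] at hS1
    rw [memD₁] at hS2
    obtain ⟨h, hh, hhS⟩ := hS1
    obtain ⟨g, hg, hSg⟩ := hS2
    exact (hcross g hg h hh).2 (hhS.trans hSg)
  have hcardfin : Fintype.card (Finset β) = N := Fintype.card_finset
  have hsum1 : U₁.card + D₂.card ≤ N := by
    rw [← card_union_of_disjoint hdisj1, ← hcardfin]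
    exact card_le_univ _
  have hsum2 : U₂.card + D₁.card ≤ N := by
    rw [← card_union_of_disjoint hdisj2, ← hcardfin]
    exact card_le_univ _
  have hU₁int : (↑U₁ : Set (Finset β)).Intersecting := by
    intro a ha b hb hd
    rw [mem_coe, memU₁] at ha hb
    obtain ⟨g, hg, hga⟩ := ha
    obtain ⟨g', hg', hg'b⟩ := hb
    have hne : g ∩ g' ≠ ∅ := by
      by_cases hgg : g = g'
      · subst hgg
        rw [inter_self]
        intro hE; exact hG0 (hE ▸ hg)
      · exact hGint g hg g' hg' hgg
    apply hne
    rw [← subset_empty]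
    calc g ∩ g' ⊆ a ∩ b := inter_subset_inter hga hg'b
    _ = ∅ := disjoint_iff_inter_eq_empty.mp hd
  have hU₂int : (↑U₂ : Set (Finset β)).Intersecting := by
    intro a ha b hb hd
    rw [mem_coe, memU₂] at ha hb
    obtain ⟨g, hg, hga⟩ := ha
    obtain ⟨g', hg', hg'b⟩ := hb
    have hne : g ∩ g' ≠ ∅ := by
      by_cases hgg : g = g'
      · subst hgg
        rw [inter_self]
        intro hE; exact hH0 (hE ▸ hg)
      · exact hHint g hg g' hg' hgg
    apply hne
    rw [← subset_empty]
    calc g ∩ g' ⊆ a ∩ b := inter_subset_inter hga hg'b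
    _ = ∅ := disjoint_iff_inter_eq_empty.mp hd
  have hu1 : 2 * U₁.card ≤ N := hcardfin ▸ hU₁int.card_le
  have hu2 : 2 * U₂.card ≤ N := hcardfin ▸ hU₂int.card_le
  -- arithmetic
  obtain ⟨a, ha⟩ : ∃ a, N = 2 * U₁.card + a := ⟨N - 2 * U₁.card, by omega⟩
  obtain ⟨b, hb⟩ : ∃ b, N = 2 * U₂.card + b := ⟨N - 2 * U₂.card, by omega⟩
  have hd2 : D₂.card ≤ U₁.card + a := by omega
  have hd1 : D₁.card ≤ U₂.card + b := by omega
  have hNpos : 0 < N := Nat.pow_pos (by norm_num : 0 < 2)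
  have key : 2 * (G.card + H.card) * N ≤ N * N := by
    calc 2 * (G.card + H.card) * N = 2 * (N * G.card) + 2 * (N * H.card) := by ring
    _ ≤ 2 * (U₁.card * D₁.card) + 2 * (U₂.card * D₂.card) := by
        exact Nat.add_le_add (Nat.mul_le_mul_left _ kle1) (Nat.mul_le_mul_left _ kle2)
    _ ≤ 2 * (U₁.card * (U₂.card + b)) + 2 * (U₂.card * (U₁.card + a)) := by
        exact Nat.add_le_add (Nat.mul_le_mul_left _ (Nat.mul_le_mul_left _ hd1))
          (Nat.mul_le_mul_left _ (Nat.mul_le_mul_left _ hd2))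
    _ ≤ (2 * U₁.card + a) * (2 * U₂.card + b) := by nlinarith
    _ = N * N := by rw [← ha, ← hb]
  exact Nat.le_of_mul_le_mul_right key hNpos

lemma lemL {α : Type*} [DecidableEq α] (Y : Finset α) (hY : Y.Nonempty)
    (G H : Finset (Finset α))
    (hGY : ∀ g ∈ G, g ⊆ Y) (hHY : ∀ h ∈ H, h ⊆ Y)
    (hGint : ∀ g ∈ G, ∀ g' ∈ G, g ≠ g' → g ∩ g' ≠ ∅)
    (hHint : ∀ h ∈ H, ∀ h' ∈ H, h ≠ h' → h ∩ h' ≠ ∅)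
    (hcross : ∀ g ∈ G, ∀ h ∈ H, ¬ g ⊆ h ∧ ¬ h ⊆ g) :
    2 * (G.card + H.card) ≤ 2 ^ Y.card := by
  classical
  set φ : Finset α → Finset (↥Y) := fun S => S.subtype (· ∈ Y) with hφ
  have hback : ∀ S : Finset α, S ⊆ Y → (φ S).map (Function.Embedding.subtype _) = S := by
    intro S hS
    rw [hφ]
    simp only [Finset.subtype_map]
    exact filter_true_of_mem (fun x hx => hS hx)
  have hinj : ∀ S ⊆ Y, ∀ T ⊆ Y, φ S = φ T → S = T := by
    intro S hS T hT h
    rw [← hback S hS, ← hback T hT, h]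
  have hmonoback : ∀ S ⊆ Y, ∀ T ⊆ Y, φ S ⊆ φ T → S ⊆ T := by
    intro S hS T hT h
    rw [← hback S hS, ← hback T hT]
    exact map_subset_map.mpr h
  have hintback : ∀ S ⊆ Y, ∀ T ⊆ Y, S ∩ T ≠ ∅ → φ S ∩ φ T ≠ ∅ := by
    intro S hS T hT h hc
    obtain ⟨x, hx⟩ := nonempty_iff_ne_empty.mpr h
    rw [mem_inter] at hx
    have hxY : x ∈ Y := hS hx.1
    have : (⟨x, hxY⟩ : ↥Y) ∈ φ S ∩ φ T := by
      rw [mem_inter, hφ]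
      simp only [mem_subtype]
      exact hx
    rw [hc] at this
    exact notMem_empty _ this
  set G' := G.image φ with hG'
  set H' := H.image φ with hH'
  have hGcard : G'.card = G.card := by
    rw [hG']
    apply card_image_of_injOn
    intro S hS T hT h
    exact hinj S (hGY S hS) T (hGY T hT) h
  have hHcard : H'.card = H.card := by
    rw [hH']
    apply card_image_of_injOn
    intro S hS T hT h
    exact hinj S (hHY S hS) T (hHY T hT) h
  have hcount : 2 * (G'.card + H'.card) ≤ 2 ^ Fintype.card ↥Y := by
    apply lemL' (by rw [Fintype.card_coe]; exact hY.card_pos)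
    · intro g hg g' hg' hne
      rw [hG', mem_image] at hg hg'
      obtain ⟨S, hS, rfl⟩ := hg
      obtain ⟨T, hT, rfl⟩ := hg'
      have hST : S ≠ T := fun h => hne (by rw [h])
      exact hintback S (hGY S hS) T (hGY T hT) (hGint S hS T hT hST)
    · intro g hg g' hg' hne
      rw [hH', mem_image] at hg hg'
      obtain ⟨S, hS, rfl⟩ := hg
      obtain ⟨T, hT, rfl⟩ := hg'
      have hST : S ≠ T := fun h => hne (by rw [h])
      exact hintback S (hHY S hS) T (hHY T hT) (hHint S hS T hT hST)
    · intro g hg h hh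
      rw [hG', mem_image] at hg
      rw [hH', mem_image] at hh
      obtain ⟨S, hS, rfl⟩ := hg
      obtain ⟨T, hT, rfl⟩ := hh
      constructor
      · intro hc
        exact (hcross S hS T hT).1 (hmonoback S (hGY S hS) T (hHY T hT) hc)
      · intro hc
        exact (hcross S hS T hT).2 (hmonoback T (hHY T hT) S (hGY S hS) hc)
  rw [hGcard, hHcard, Fintype.card_coe] at hcount
  exact hcount
open Finset

lemma keylem {α : Type*} [DecidableEq α] (X₁ X₂ : Finset α)
    (h1 : X₁.Nonempty) (h2 : X₂.Nonempty)
    (F : Finset (Finset α)) (hF : F ⊆ (X₁ ∪ X₂).powerset)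
    (h1I1S : ∀ F₁ ∈ F, ∀ F₂ ∈ F, F₁ ≠ F₂ →
      ¬ ((F₁ ∩ X₁) ∩ (F₂ ∩ X₁) = ∅ ∧ (F₁ ∩ X₂ ⊆ F₂ ∩ X₂ ∨ F₂ ∩ X₂ ⊆ F₁ ∩ X₂)) ∧
      ¬ ((F₁ ∩ X₂) ∩ (F₂ ∩ X₂) = ∅ ∧ (F₁ ∩ X₁ ⊆ F₂ ∩ X₁ ∨ F₂ ∩ X₁ ⊆ F₁ ∩ X₁)))
    (A : Finset α) (hA : A ⊆ X₁)
    (hlemL : ∀ (G H : Finset (Finset α)),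
      (∀ g ∈ G, g ⊆ X₂) → (∀ h ∈ H, h ⊆ X₂) →
      (∀ g ∈ G, ∀ g' ∈ G, g ≠ g' → g ∩ g' ≠ ∅) →
      (∀ h ∈ H, ∀ h' ∈ H, h ≠ h' → h ∩ h' ≠ ∅) →
      (∀ g ∈ G, ∀ h ∈ H, ¬ g ⊆ h ∧ ¬ h ⊆ g) →
      2 * (G.card + H.card) ≤ 2 ^ X₂.card) :
    2 * ((F.filter (fun S => S ∩ X₁ = A)).card
      + (F.filter (fun S => S ∩ X₁ = X₁ \ A)).card) ≤ 2 ^ X₂.card := by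
  classical
  set FA := F.filter (fun S => S ∩ X₁ = A) with hFA
  set FB := F.filter (fun S => S ∩ X₁ = X₁ \ A) with hFB
  have hAne : A ≠ X₁ \ A := by
    obtain ⟨x, hx⟩ := h1
    intro h
    by_cases hxA : x ∈ A
    · have := h ▸ hxA
      rw [mem_sdiff] at this
      exact this.2 hxA
    · have : x ∈ X₁ \ A := mem_sdiff.mpr ⟨hx, hxA⟩
      rw [← h] at this
      exact hxA this
  have hdecomp : ∀ S ∈ F, S = (S ∩ X₁) ∪ (S ∩ X₂) := by
    intro S hS
    have hSsub : S ⊆ X₁ ∪ X₂ := mem_powerset.mp (hF hS)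
    rw [← inter_union_distrib_left]
    exact (inter_eq_left.mpr hSsub).symm
  set G := FA.image (· ∩ X₂) with hG
  set H := FB.image (· ∩ X₂) with hH
  have hGcard : G.card = FA.card := by
    apply card_image_of_injOn
    intro S hS T hT h
    simp only [mem_coe, hFA, mem_filter] at hS hT
    have h' : S ∩ X₂ = T ∩ X₂ := h
    calc S = (S ∩ X₁) ∪ (S ∩ X₂) := hdecomp S hS.1
    _ = (T ∩ X₁) ∪ (T ∩ X₂) := by rw [hS.2, hT.2, h']
    _ = T := (hdecomp T hT.1).symm
  have hHcard : H.card = FB.card := by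
    apply card_image_of_injOn
    intro S hS T hT h
    simp only [mem_coe, hFB, mem_filter] at hS hT
    have h' : S ∩ X₂ = T ∩ X₂ := h
    calc S = (S ∩ X₁) ∪ (S ∩ X₂) := hdecomp S hS.1
    _ = (T ∩ X₁) ∪ (T ∩ X₂) := by rw [hS.2, hT.2, h']
    _ = T := (hdecomp T hT.1).symm
  have hmain := hlemL G H
    (by rintro g hg; rw [hG, mem_image] at hg; obtain ⟨S, _, rfl⟩ := hg
        exact inter_subset_right)
    (by rintro h hh; rw [hH, mem_image] at hh; obtain ⟨S, _, rfl⟩ := hh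
        exact inter_subset_right)
    (by
      intro g hg g' hg' hne
      rw [hG, mem_image] at hg hg'
      obtain ⟨S, hS, rfl⟩ := hg
      obtain ⟨T, hT, rfl⟩ := hg'
      rw [hFA, mem_filter] at hS hT
      have hST : S ≠ T := fun h => hne (by rw [h])
      intro hc
      exact (h1I1S S hS.1 T hT.1 hST).2 ⟨hc, Or.inl (by rw [hS.2, hT.2])⟩)
    (by
      intro g hg g' hg' hne
      rw [hH, mem_image] at hg hg'
      obtain ⟨S, hS, rfl⟩ := hg
      obtain ⟨T, hT, rfl⟩ := hg'
      rw [hFB, mem_filter] at hS hT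
      have hST : S ≠ T := fun h => hne (by rw [h])
      intro hc
      exact (h1I1S S hS.1 T hT.1 hST).2 ⟨hc, Or.inl (by rw [hS.2, hT.2])⟩)
    (by
      intro g hg h hh
      rw [hG, mem_image] at hg
      rw [hH, mem_image] at hh
      obtain ⟨S, hS, rfl⟩ := hg
      obtain ⟨T, hT, rfl⟩ := hh
      rw [hFA, mem_filter] at hS
      rw [hFB, mem_filter] at hT
      have hST : S ≠ T := by
        intro h
        apply hAne
        have heq : S ∩ X₁ = T ∩ X₁ := by rw [h]
        rw [hS.2, hT.2] at heq
        exact heq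
      have := (h1I1S S hS.1 T hT.1 hST).1
      have hdisjA : (S ∩ X₁) ∩ (T ∩ X₁) = ∅ := by
        rw [hS.2, hT.2]
        exact inter_sdiff_self A X₁
      constructor
      · intro hc; exact this ⟨hdisjA, Or.inl hc⟩
      · intro hc; exact this ⟨hdisjA, Or.inr hc⟩)
  rw [hGcard, hHcard] at hmain
  exact hmain

theorem stmt_13 {α : Type*} [DecidableEq α] (X₁ X₂ : Finset α)
    (hdisj : Disjoint X₁ X₂) (h1 : X₁.Nonempty) (h2 : X₂.Nonempty)
    (F : Finset (Finset α)) (hF : F ⊆ (X₁ ∪ X₂).powerset)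
    (h1I1S : ∀ F₁ ∈ F, ∀ F₂ ∈ F, F₁ ≠ F₂ →
      ¬ ((F₁ ∩ X₁) ∩ (F₂ ∩ X₁) = ∅ ∧ (F₁ ∩ X₂ ⊆ F₂ ∩ X₂ ∨ F₂ ∩ X₂ ⊆ F₁ ∩ X₂)) ∧
      ¬ ((F₁ ∩ X₂) ∩ (F₂ ∩ X₂) = ∅ ∧ (F₁ ∩ X₁ ⊆ F₂ ∩ X₁ ∨ F₂ ∩ X₁ ⊆ F₁ ∩ X₁))) :
    4 * F.card ≤ 2 ^ (X₁ ∪ X₂).card := by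
  classical
  have hsum : F.card = ∑ A ∈ X₁.powerset, (F.filter (fun S => S ∩ X₁ = A)).card :=
    card_eq_sum_card_fiberwise (fun S _ => mem_powerset.mpr inter_subset_right)
  have hsum2 : ∑ A ∈ X₁.powerset, (F.filter (fun S => S ∩ X₁ = X₁ \ A)).card = F.card := by
    rw [hsum]
    apply Finset.sum_nbij' (i := fun A => X₁ \ A) (j := fun B => X₁ \ B)
    · intro A hA; exact mem_powerset.mpr sdiff_subset
    · intro A hA; exact mem_powerset.mpr sdiff_subset
    · intro A hA; exact Finset.sdiff_sdiff_eq_self (mem_powerset.mp hA)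
    · intro A hA; exact Finset.sdiff_sdiff_eq_self (mem_powerset.mp hA)
    · intro A hA; rfl
  have hbound : ∀ A ∈ X₁.powerset,
      2 * ((F.filter (fun S => S ∩ X₁ = A)).card
        + (F.filter (fun S => S ∩ X₁ = X₁ \ A)).card) ≤ 2 ^ X₂.card := by
    intro A hA
    exact keylem X₁ X₂ h1 h2 F hF h1I1S A (mem_powerset.mp hA)
      (fun G H a b c d e => lemL X₂ h2 G H a b c d e)
  have htot : ∑ A ∈ X₁.powerset,
      2 * ((F.filter (fun S => S ∩ X₁ = A)).card
        + (F.filter (fun S => S ∩ X₁ = X₁ \ A)).card)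
      ≤ ∑ _A ∈ X₁.powerset, 2 ^ X₂.card := Finset.sum_le_sum hbound
  rw [Finset.sum_const, card_powerset, smul_eq_mul] at htot
  have hlhs : ∑ A ∈ X₁.powerset,
      2 * ((F.filter (fun S => S ∩ X₁ = A)).card
        + (F.filter (fun S => S ∩ X₁ = X₁ \ A)).card) = 4 * F.card := by
    rw [Finset.sum_congr rfl (fun A _ => Nat.mul_add 2 _ _), Finset.sum_add_distrib,
      ← Finset.mul_sum, ← Finset.mul_sum, hsum2, ← hsum]
    ring
  rw [hlhs] at htot
  calc 4 * F.card ≤ 2 ^ X₁.card * 2 ^ X₂.card := htot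
  _ = 2 ^ (X₁ ∪ X₂).card := by rw [card_union_of_disjoint hdisj, pow_add]
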